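/- Let n ≥ 2 be an integer, let p_1,…,p_n ∈ (0,1), and let j ∈ {1,…,n−1} satisfy π_j ≥ π̄_j and π_{j+1} < π̄_{j+1}. Set D = π_j − π_{j+1} + π̄_{j+1} − π̄_j, V = (π̄_{j+1}π_j − π_{j+1}π̄_j)/D, q = (π̄_{j+1} − π_{j+1})/D and r = (π̄_{j+1} − π̄_j)/D. Suppose that for every i ∈ {1,…,n}, (π_i − π_j)(π̄_{j+1} − π̄_j) ≥ (π_j − π_{j+1})(π̄_j − π̄_i). Then: (i) for every expanding search σ of the cycle C_n, q·P(j,σ) + (1−q)·P(j+1,σ) ≤ V; and (ii) for every i ∈ {1,…,n}, r·π_i + (1−r)·π̄_i ≥ V. (Consequently the value of the search and rescue game on C_n with one target is V; it is optimal for the Hider to hide at j with probability q and at j+1 with probability 1−q, and for the Searcher to sweep clockwise with probability r and anticlockwise with probability 1−r.) -/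

import Mathlib

/-- Adjacency in the cycle `C n` with vertex set `{0, 1, …, n}`. -/
def CycleAdj (n : ℕ) (u v : ℕ) : Prop :=
  v = u + 1 ∨ u = v + 1 ∨ (u = 0 ∧ v = n) ∨ (u = n ∧ v = 0)

/-- An expanding search of the cycle `C n`, encoded as a permutation of `Fin n`
(position `j` searches vertex `(σ j : ℕ) + 1 ∈ {1, …, n}`). -/
def IsExpandingSearch (n : ℕ) (σ : Equiv.Perm (Fin n)) : Prop :=
  ∀ j : Fin n, CycleAdj n ((σ j : ℕ) + 1) 0 ∨
    ∃ i : Fin n, i < j ∧ CycleAdj n ((σ j : ℕ) + 1) ((σ i : ℕ) + 1)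

/-- The payoff `P(v, σ)`: the product of the success probabilities of all vertices
searched up to and including the vertex `v` (encoded as `v : Fin n`, label `v + 1`). -/
def payoff (n : ℕ) (p : ℕ → ℝ) (σ : Equiv.Perm (Fin n)) (v : Fin n) : ℝ :=
  ∏ i ∈ Finset.univ.filter (fun i : Fin n => i ≤ σ.symm v), p ((σ i : ℕ) + 1)

/-- `π j = p 1 ⋯ p j`. -/
def piProd (p : ℕ → ℝ) (j : ℕ) : ℝ := ∏ i ∈ Finset.Icc 1 j, p i

/-- `π̄ j = p j ⋯ p n`. -/
def piBar (n : ℕ) (p : ℕ → ℝ) (j : ℕ) : ℝ := ∏ i ∈ Finset.Icc j n, p i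

section Helpers

variable {n : ℕ} {p : ℕ → ℝ}

lemma prod_mem_pos (hp : ∀ i ∈ Finset.Icc 1 n, 0 < p i ∧ p i < 1)
    {s : Finset ℕ} (hs : s ⊆ Finset.Icc 1 n) : 0 < ∏ i ∈ s, p i :=
  Finset.prod_pos fun i hi => (hp i (hs hi)).1

lemma prod_mem_le_one (hp : ∀ i ∈ Finset.Icc 1 n, 0 < p i ∧ p i < 1)
    {s : Finset ℕ} (hs : s ⊆ Finset.Icc 1 n) : ∏ i ∈ s, p i ≤ 1 :=
  Finset.prod_le_one (fun i hi => (hp i (hs hi)).1.le) (fun i hi => (hp i (hs hi)).2.le)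

lemma prod_subset_le (hp : ∀ i ∈ Finset.Icc 1 n, 0 < p i ∧ p i < 1)
    {s t : Finset ℕ} (hst : s ⊆ t) (ht : t ⊆ Finset.Icc 1 n) :
    ∏ i ∈ t, p i ≤ ∏ i ∈ s, p i := by
  rw [← Finset.prod_sdiff hst]
  exact mul_le_of_le_one_left (prod_mem_pos hp (fun i hi => ht (hst hi))).le
    (prod_mem_le_one hp (fun i hi => ht (Finset.mem_sdiff.mp hi).1))

lemma piProd_pos (hp : ∀ i ∈ Finset.Icc 1 n, 0 < p i ∧ p i < 1) {a : ℕ} (ha : a ≤ n) :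
    0 < piProd p a :=
  prod_mem_pos hp (Finset.Icc_subset_Icc le_rfl ha)

lemma piProd_le_one (hp : ∀ i ∈ Finset.Icc 1 n, 0 < p i ∧ p i < 1) {a : ℕ} (ha : a ≤ n) :
    piProd p a ≤ 1 :=
  prod_mem_le_one hp (Finset.Icc_subset_Icc le_rfl ha)

lemma piProd_anti (hp : ∀ i ∈ Finset.Icc 1 n, 0 < p i ∧ p i < 1) {a b : ℕ}
    (hab : a ≤ b) (hb : b ≤ n) : piProd p b ≤ piProd p a :=
  prod_subset_le hp (Finset.Icc_subset_Icc le_rfl hab) (Finset.Icc_subset_Icc le_rfl hb)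

lemma piBar_pos (hp : ∀ i ∈ Finset.Icc 1 n, 0 < p i ∧ p i < 1) {c : ℕ} (hc : 1 ≤ c) :
    0 < piBar n p c :=
  prod_mem_pos hp (Finset.Icc_subset_Icc hc le_rfl)

lemma piBar_le_one (hp : ∀ i ∈ Finset.Icc 1 n, 0 < p i ∧ p i < 1) {c : ℕ} (hc : 1 ≤ c) :
    piBar n p c ≤ 1 :=
  prod_mem_le_one hp (Finset.Icc_subset_Icc hc le_rfl)

lemma piBar_mono (hp : ∀ i ∈ Finset.Icc 1 n, 0 < p i ∧ p i < 1) {c c' : ℕ}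
    (hc : 1 ≤ c) (hcc : c ≤ c') : piBar n p c ≤ piBar n p c' :=
  prod_subset_le hp (Finset.Icc_subset_Icc hcc le_rfl) (Finset.Icc_subset_Icc hc le_rfl)

lemma piProd_succ {j : ℕ} : piProd p (j + 1) = piProd p j * p (j + 1) := by
  unfold piProd
  exact Finset.prod_Icc_succ_top (by omega) p

lemma piBar_succ {c : ℕ} (hc : 1 ≤ c) (hcn : c ≤ n) :
    piBar n p c = p c * piBar n p (c + 1) := by
  unfold piBar
  rw [← Finset.Ico_add_one_right_eq_Icc, ← Finset.Ico_add_one_right_eq_Icc]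
  exact Finset.prod_eq_prod_Ico_succ_bot (by omega) p

-- `π_j · π̄_{j+1} = π_{j+1} · π̄_{j+2}`
lemma cross_identity {j : ℕ} (hj : j + 1 ≤ n) :
    piProd p j * piBar n p (j + 1) = piProd p (j + 1) * piBar n p (j + 2) := by
  rw [piProd_succ, piBar_succ (by omega) hj]; ring

-- `π_j ≤ π_a · p_j` for `a < j ≤ n`
lemma piProd_le_step (hp : ∀ i ∈ Finset.Icc 1 n, 0 < p i ∧ p i < 1)
    {a j : ℕ} (haj : a < j) (hj : j ≤ n) : piProd p j ≤ piProd p a * p j := by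
  obtain ⟨k, rfl⟩ : ∃ k, j = k + 1 := ⟨j - 1, by omega⟩
  rw [piProd_succ]
  have h1 : piProd p k ≤ piProd p a := piProd_anti hp (by omega) (by omega)
  have h2 : 0 < p (k + 1) := (hp (k+1) (by simp; omega)).1
  nlinarith [piProd_pos hp (show a ≤ n by omega)]

-- product over an arc
lemma prod_arc (hp : ∀ i ∈ Finset.Icc 1 n, 0 < p i ∧ p i < 1) {a c : ℕ} (hac : a < c) :
    ∏ i ∈ (Finset.Icc 1 a ∪ Finset.Icc c n), p i = piProd p a * piBar n p c := by
  unfold piProd piBar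
  rw [Finset.prod_union]
  rw [Finset.disjoint_left]
  intro x hx hx'
  simp only [Finset.mem_Icc] at hx hx'
  omega

end Helpers

def Tset (n : ℕ) (σ : Equiv.Perm (Fin n)) (m : ℕ) : Finset ℕ :=
  (Finset.univ.filter (fun i : Fin n => (i : ℕ) ≤ m)).image (fun i => (σ i : ℕ) + 1)

lemma mem_Tset {n : ℕ} (σ : Equiv.Perm (Fin n)) (m : ℕ) (v : Fin n) :
    ((v : ℕ) + 1 ∈ Tset n σ m) ↔ ((σ.symm v : ℕ) ≤ m) := by
  unfold Tset
  simp only [Finset.mem_image, Finset.mem_filter, Finset.mem_univ, true_and]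
  constructor
  · rintro ⟨i, hi, hiv⟩
    have : σ i = v := Fin.ext (by omega)
    rw [← this, Equiv.symm_apply_apply]; exact hi
  · intro h
    exact ⟨σ.symm v, h, by rw [Equiv.apply_symm_apply]⟩

lemma Tset_mono {n : ℕ} (σ : Equiv.Perm (Fin n)) {m m' : ℕ} (h : m ≤ m') :
    Tset n σ m ⊆ Tset n σ m' := by
  apply Finset.image_subset_image
  intro i hi
  simp only [Finset.mem_filter, Finset.mem_univ, true_and] at hi ⊢
  omega

lemma Tset_subset_Icc {n : ℕ} (σ : Equiv.Perm (Fin n)) (m : ℕ) :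
    Tset n σ m ⊆ Finset.Icc 1 n := by
  unfold Tset
  intro x hx
  simp only [Finset.mem_image] at hx
  obtain ⟨i, _, rfl⟩ := hx
  have := (σ i).isLt
  simp [Finset.mem_Icc]

lemma Tset_succ {n : ℕ} (σ : Equiv.Perm (Fin n)) {m : ℕ} (hm : m + 1 < n) :
    Tset n σ (m + 1) = insert ((σ ⟨m + 1, hm⟩ : ℕ) + 1) (Tset n σ m) := by
  unfold Tset
  rw [show (Finset.univ.filter (fun i : Fin n => (i : ℕ) ≤ m + 1)) =
      insert ⟨m + 1, hm⟩ (Finset.univ.filter (fun i : Fin n => (i : ℕ) ≤ m)) by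
    ext i; simp only [Finset.mem_filter, Finset.mem_univ, true_and, Finset.mem_insert,
      Fin.ext_iff]; omega]
  rw [Finset.image_insert]

lemma Tset_zero {n : ℕ} (σ : Equiv.Perm (Fin n)) (hn : 0 < n) :
    Tset n σ 0 = {(σ ⟨0, hn⟩ : ℕ) + 1} := by
  unfold Tset
  rw [show (Finset.univ.filter (fun i : Fin n => (i : ℕ) ≤ 0)) = {(⟨0, hn⟩ : Fin n)} by
    ext i; simp [Fin.ext_iff]]
  rw [Finset.image_singleton]

lemma not_mem_Tset {n : ℕ} (σ : Equiv.Perm (Fin n)) {m : ℕ} (hm : m + 1 < n) :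
    ((σ ⟨m + 1, hm⟩ : ℕ) + 1) ∉ Tset n σ m := by
  unfold Tset
  simp only [Finset.mem_image, Finset.mem_filter, Finset.mem_univ, true_and, not_exists]
  intro i hi
  obtain ⟨hi1, hi2⟩ := hi
  have h2 := σ.injective (Fin.ext (show ((σ i : ℕ)) = ((σ ⟨m+1,hm⟩ : ℕ)) by omega))
  rw [Fin.ext_iff] at h2
  simp at h2
  omega

lemma arc_lemma {n : ℕ} (σ : Equiv.Perm (Fin n)) (hσ : IsExpandingSearch n σ) :
    ∀ m : ℕ, ∀ hm : m < n, ∃ a c : ℕ, a < c ∧ c ≤ n + 1 ∧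
      Tset n σ m = Finset.Icc 1 a ∪ Finset.Icc c n ∧
      ((σ ⟨m, hm⟩ : ℕ) + 1 = a ∨ (σ ⟨m, hm⟩ : ℕ) + 1 = c) := by
  intro m
  induction m with
  | zero =>
    intro hm
    have hb := (σ ⟨0, hm⟩).isLt
    have hv : (σ ⟨0, hm⟩ : ℕ) + 1 = 1 ∨ (σ ⟨0, hm⟩ : ℕ) + 1 = n := by
      rcases hσ ⟨0, hm⟩ with h | ⟨i, hi, _⟩
      · rcases h with h | h | ⟨h, h'⟩ | ⟨h, _⟩ <;> omega
      · exact absurd hi (by simp [Fin.lt_def])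
    rw [Tset_zero σ hm]
    rcases hv with hv | hv
    · refine ⟨1, n + 1, by omega, by omega, ?_, Or.inl hv⟩
      rw [hv]; ext x; simp only [Finset.mem_singleton, Finset.mem_union, Finset.mem_Icc]; omega
    · refine ⟨0, n, by omega, by omega, ?_, Or.inr hv⟩
      rw [hv]; ext x; simp only [Finset.mem_singleton, Finset.mem_union, Finset.mem_Icc]; omega
  | succ m ih =>
    intro hm
    obtain ⟨a, c, hac, hcn, hT, _⟩ := ih (by omega)
    have hb := (σ ⟨m + 1, hm⟩).isLt
    set v := (σ ⟨m + 1, hm⟩ : ℕ) + 1 with hv_def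
    have hv1 : 1 ≤ v := by omega
    have hvn : v ≤ n := by omega
    have hvnot := not_mem_Tset σ hm
    rw [← hv_def, hT] at hvnot
    simp only [Finset.mem_union, Finset.mem_Icc, not_or] at hvnot
    have hva : a < v := by omega
    have hvc : v < c := by omega
    have hkey : (v = a + 1 ∧ a + 1 < c) ∨ (v = c - 1 ∧ a + 1 < c ∧ 2 ≤ c) := by
      rcases hσ ⟨m + 1, hm⟩ with h | ⟨i, hilt, hadj⟩
      · rcases h with h | h | ⟨h, h'⟩ | ⟨h, _⟩ <;> omega
      · have hbi := (σ i).isLt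
        have hu : ((σ i : ℕ) + 1) ∈ Tset n σ m := by
          unfold Tset
          simp only [Finset.mem_image, Finset.mem_filter, Finset.mem_univ, true_and]
          exact ⟨i, by rw [Fin.lt_def] at hilt; simp at hilt; omega, rfl⟩
        rw [hT] at hu
        simp only [Finset.mem_union, Finset.mem_Icc] at hu
        rcases hadj with h | h | ⟨h, h'⟩ | ⟨h, _⟩ <;> omega
    rw [Tset_succ σ hm, ← hv_def, hT]
    rcases hkey with ⟨hveq, hlt⟩ | ⟨hveq, hlt, hc2⟩
    · refine ⟨a + 1, c, hlt, hcn, ?_, Or.inl hveq⟩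
      ext x
      simp only [Finset.mem_insert, Finset.mem_union, Finset.mem_Icc]
      omega
    · refine ⟨a, c - 1, by omega, by omega, ?_, Or.inr hveq⟩
      ext x
      simp only [Finset.mem_insert, Finset.mem_union, Finset.mem_Icc]
      omega

lemma payoff_eq {n : ℕ} (p : ℕ → ℝ) (σ : Equiv.Perm (Fin n)) (v : Fin n) :
    payoff n p σ v = ∏ x ∈ Tset n σ ((σ.symm v : ℕ)), p x := by
  unfold payoff Tset
  rw [Finset.prod_image]
  · congr 1
  · intro i _ i' _ h
    exact σ.injective (Fin.ext (by simp only at h; omega))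


/-- Lemma 4: if `π j ≥ π̄ j`, `π (j+1) < π̄ (j+1)`, and condition (1) holds, then
with `V, q, r` as given, the Hider mixture on `{j, j+1}` with weights `(q, 1-q)` caps
every expanding search at `V`, and the Searcher mixture of the clockwise and
anticlockwise sweeps with weights `(r, 1-r)` guarantees `V` against every vertex. -/
theorem cycle_one_target_solution (n : ℕ) (hn : 2 ≤ n) (p : ℕ → ℝ)
    (hp : ∀ i ∈ Finset.Icc 1 n, 0 < p i ∧ p i < 1)
    (j : ℕ) (hj1 : 1 ≤ j) (hj2 : j ≤ n - 1)
    (hπ1 : piBar n p j ≤ piProd p j)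
    (hπ2 : piProd p (j + 1) < piBar n p (j + 1))
    (D V q r : ℝ)
    (hD : D = piProd p j - piProd p (j + 1) + piBar n p (j + 1) - piBar n p j)
    (hV : V = (piBar n p (j + 1) * piProd p j - piProd p (j + 1) * piBar n p j) / D)
    (hq : q = (piBar n p (j + 1) - piProd p (j + 1)) / D)
    (hr : r = (piBar n p (j + 1) - piBar n p j) / D)
    (hcond : ∀ i ∈ Finset.Icc 1 n,
      (piProd p i - piProd p j) * (piBar n p (j + 1) - piBar n p j) ≥
        (piProd p j - piProd p (j + 1)) * (piBar n p j - piBar n p i)) :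
    (∀ σ : Equiv.Perm (Fin n), IsExpandingSearch n σ →
      q * payoff n p σ ⟨j - 1, by omega⟩ + (1 - q) * payoff n p σ ⟨j, by omega⟩ ≤ V) ∧
    (∀ i ∈ Finset.Icc 1 n, r * piProd p i + (1 - r) * piBar n p i ≥ V) := by
  have hjn : j + 1 ≤ n := by omega
  have hD0 : 0 < D := by rw [hD]; linarith
  have hA0 : 0 < piProd p j := piProd_pos hp (by omega)
  have hA1 : piProd p j ≤ 1 := piProd_le_one hp (by omega)
  have hB0 : 0 < piProd p (j + 1) := piProd_pos hp hjn
  have hAb0 : 0 < piBar n p j := piBar_pos hp hj1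
  have hBb0 : 0 < piBar n p (j + 1) := piBar_pos hp (by omega)
  have hq0 : 0 ≤ q := by rw [hq]; apply div_nonneg _ hD0.le; linarith
  have hq1 : q ≤ 1 := by
    rw [hq, div_le_one hD0]
    linarith
  have hVq : q * piProd p j + (1 - q) * piProd p (j + 1) = V := by
    rw [hq, hV]
    field_simp
    rw [hD]
    ring
  have hVq' : q * piBar n p j + (1 - q) * piBar n p (j + 1) = V := by
    rw [hq, hV]
    field_simp
    rw [hD]
    ring
  have hV0 : 0 ≤ V := by
    nlinarith [mul_nonneg hq0 hA0.le,
      mul_nonneg (show (0:ℝ) ≤ 1 - q by linarith) hB0.le]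
  constructor
  · intro σ hσ
    have hlt1 : j - 1 < n := by omega
    have hlt2 : j < n := by omega
    set jv : Fin n := ⟨j - 1, hlt1⟩ with hjv
    set kv : Fin n := ⟨j, hlt2⟩ with hkv
    show q * payoff n p σ jv + (1 - q) * payoff n p σ kv ≤ V
    have hjv1 : (jv : ℕ) + 1 = j := by
      have : (jv : ℕ) = j - 1 := rfl
      omega
    have hkv1 : (kv : ℕ) + 1 = j + 1 := by
      have : (kv : ℕ) = j := rfl
      omega
    set t : Fin n := σ.symm jv with ht
    set s : Fin n := σ.symm kv with hs
    obtain ⟨a, c, hac, hcn, hTt, hend⟩ := arc_lemma σ hσ (t : ℕ) t.isLt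
    obtain ⟨a', c', hac', hcn', hTs, hend'⟩ := arc_lemma σ hσ (s : ℕ) s.isLt
    rw [Fin.eta] at hend hend'
    rw [ht, Equiv.apply_symm_apply] at hend
    rw [hs, Equiv.apply_symm_apply] at hend'
    rw [hjv1] at hend
    rw [hkv1] at hend'
    rw [payoff_eq p σ jv, payoff_eq p σ kv, ← ht, ← hs, hTt, hTs,
      prod_arc hp hac, prod_arc hp hac']
    have hts : (t : ℕ) ≠ (s : ℕ) := by
      intro hh
      have h2 : t = s := Fin.ext hh
      rw [ht, hs] at h2
      have h3 := σ.symm.injective h2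
      rw [Fin.ext_iff] at h3
      have h4 : (jv : ℕ) = j - 1 := rfl
      have h5 : (kv : ℕ) = j := rfl
      omega
    rcases Nat.lt_or_ge (t : ℕ) (s : ℕ) with hlt | hge
    · -- j searched before j+1
      have hknot : j + 1 ∉ Finset.Icc 1 a ∪ Finset.Icc c n := by
        rw [← hTt, ← hkv1, mem_Tset σ (t : ℕ) kv, ← hs]
        omega
      simp only [Finset.mem_union, Finset.mem_Icc, not_or, not_and, not_le] at hknot
      have hja : j = a := by
        rcases hend with hh | hh
        · exact hh
        · exfalso; omega
      have hc2 : j + 2 ≤ c := by omega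
      have hjmem' : j ∈ Finset.Icc 1 a' ∪ Finset.Icc c' n := by
        rw [← hTs, ← hjv1]
        exact (mem_Tset σ (s : ℕ) jv).mpr (by rw [← ht]; omega)
      simp only [Finset.mem_union, Finset.mem_Icc] at hjmem'
      have hXc1 : 1 ≤ c := by omega
      have hX1 : piBar n p c ≤ 1 := piBar_le_one hp hXc1
      have hX0 : 0 < piBar n p c := piBar_pos hp hXc1
      rcases hend' with h' | h'
      · -- j+1 = a'
        have hcc : c' ≤ c := by
          rcases Nat.lt_or_ge n c with hh | hh
          · omega
          · have hcmem : c ∈ Finset.Icc 1 a' ∪ Finset.Icc c' n := by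
              rw [← hTs]
              apply Tset_mono σ (le_of_lt hlt)
              rw [hTt]
              simp only [Finset.mem_union, Finset.mem_Icc]
              omega
            simp only [Finset.mem_union, Finset.mem_Icc] at hcmem
            omega
        have hYX : piBar n p c' ≤ piBar n p c := piBar_mono hp (by omega) hcc
        rw [← hja, ← h']
        calc q * (piProd p j * piBar n p c) + (1 - q) * (piProd p (j + 1) * piBar n p c')
            ≤ q * (piProd p j * piBar n p c) + (1 - q) * (piProd p (j + 1) * piBar n p c) := by
              linarith [mul_le_mul_of_nonneg_left hYX
                (mul_nonneg (show (0:ℝ) ≤ 1 - q by linarith) hB0.le)]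
          _ = piBar n p c * (q * piProd p j + (1 - q) * piProd p (j + 1)) := by ring
          _ = piBar n p c * V := by rw [hVq]
          _ ≤ V := by linarith [mul_le_mul_of_nonneg_right hX1 hV0]
      · -- j+1 = c', so a' = j
        have ha'j : a' = j := by
          rcases hjmem' with hh | hh <;> omega
        have hcross : piProd p j * piBar n p (j + 1) =
            piProd p (j + 1) * piBar n p (j + 2) := cross_identity hjn
        have hZX : piBar n p (j + 2) ≤ piBar n p c := piBar_mono hp (by omega) hc2
        rw [← hja, ← h', ha'j]
        calc q * (piProd p j * piBar n p c) + (1 - q) * (piProd p j * piBar n p (j + 1))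
            = q * (piProd p j * piBar n p c) +
              (1 - q) * (piProd p (j + 1) * piBar n p (j + 2)) := by rw [hcross]
          _ ≤ q * (piProd p j * piBar n p c) + (1 - q) * (piProd p (j + 1) * piBar n p c) := by
              linarith [mul_le_mul_of_nonneg_left hZX
                (mul_nonneg (show (0:ℝ) ≤ 1 - q by linarith) hB0.le)]
          _ = piBar n p c * (q * piProd p j + (1 - q) * piProd p (j + 1)) := by ring
          _ = piBar n p c * V := by rw [hVq]
          _ ≤ V := by linarith [mul_le_mul_of_nonneg_right hX1 hV0]
    · -- j+1 searched before j
      have hlt' : (s : ℕ) < (t : ℕ) := by omega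
      have hjnot : j ∉ Finset.Icc 1 a' ∪ Finset.Icc c' n := by
        rw [← hTs, ← hjv1, mem_Tset σ (s : ℕ) jv, ← ht]
        omega
      simp only [Finset.mem_union, Finset.mem_Icc, not_or, not_and, not_le] at hjnot
      have hkc' : j + 1 = c' := by
        rcases hend' with hh | hh
        · exfalso; omega
        · exact hh
      have ha'j : a' + 1 ≤ j := by omega
      have hkmem' : j + 1 ∈ Finset.Icc 1 a ∪ Finset.Icc c n := by
        rw [← hTt, ← hkv1]
        exact (mem_Tset σ (t : ℕ) kv).mpr (by rw [← hs]; omega)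
      simp only [Finset.mem_union, Finset.mem_Icc] at hkmem'
      have hPa'0 : 0 < piProd p a' := piProd_pos hp (by omega)
      have hPa'1 : piProd p a' ≤ 1 := piProd_le_one hp (by omega)
      rcases hend with h | h
      · -- j = a, so c = j + 1 and j is last
        have hcj : c = j + 1 := by omega
        have hstep : piProd p j ≤ piProd p a' * p j :=
          piProd_le_step hp (by omega) (by omega)
        have hbar : piBar n p j = p j * piBar n p (j + 1) := piBar_succ hj1 (by omega)
        rw [← h, hcj, ← hkc']
        calc q * (piProd p j * piBar n p (j + 1)) + (1 - q) * (piProd p a' * piBar n p (j + 1))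
            ≤ q * (piProd p a' * (p j * piBar n p (j + 1))) +
              (1 - q) * (piProd p a' * piBar n p (j + 1)) := by
              linarith [mul_le_mul_of_nonneg_left hstep (mul_nonneg hq0 hBb0.le)]
          _ = piProd p a' * (q * piBar n p j + (1 - q) * piBar n p (j + 1)) := by
              rw [hbar]; ring
          _ = piProd p a' * V := by rw [hVq']
          _ ≤ V := by linarith [mul_le_mul_of_nonneg_right hPa'1 hV0]
      · -- j = c
        have haa : a' ≤ a := by
          rcases Nat.eq_zero_or_pos a' with h0 | h0
          · omega
          · have hamem : a' ∈ Finset.Icc 1 a ∪ Finset.Icc c n := by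
              rw [← hTt]
              apply Tset_mono σ (le_of_lt hlt')
              rw [hTs]
              simp only [Finset.mem_union, Finset.mem_Icc]
              omega
            simp only [Finset.mem_union, Finset.mem_Icc] at hamem
            omega
        have hPa : piProd p a ≤ piProd p a' := piProd_anti hp haa (by omega)
        rw [← h, ← hkc']
        calc q * (piProd p a * piBar n p j) + (1 - q) * (piProd p a' * piBar n p (j + 1))
            ≤ q * (piProd p a' * piBar n p j) + (1 - q) * (piProd p a' * piBar n p (j + 1)) := by
              linarith [mul_le_mul_of_nonneg_left hPa (mul_nonneg hq0 hAb0.le)]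
          _ = piProd p a' * (q * piBar n p j + (1 - q) * piBar n p (j + 1)) := by ring
          _ = piProd p a' * V := by rw [hVq']
          _ ≤ V := by linarith [mul_le_mul_of_nonneg_right hPa'1 hV0]
  · intro i hi
    have h1 := hcond i hi
    have key : (r * piProd p i + (1 - r) * piBar n p i - V) * D =
        (piProd p i - piProd p j) * (piBar n p (j + 1) - piBar n p j) +
        (piProd p j - piProd p (j + 1)) * (piBar n p i - piBar n p j) := by
      rw [hr, hV]
      field_simp
      rw [hD]
      ring
    nlinarith [key, h1, hD0]
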